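/- arXiv:2307.01439 — 4 statements merged into one kernel-verified Lean document; each statement's English description precedes it below -/
import Mathlib

section
/- For all real numbers s, t, a, c with 0 < s < t < 1, 0 < a < 1, and c > 0, and for all real x_n, there exists a constant C (depending only on a and c, independent of s, t, x_n) such that exp(-x_n^2/(c s)) / (1 - t + s)^{1-a} ≤ C / (x_n^2 + 1 - t + s)^{1-a}. -/
open Real

theorem stmt0 (a c : ℝ) (ha0 : 0 < a) (ha1 : a < 1) (hc : 0 < c) :
    ∃ C : ℝ, 0 < C ∧ ∀ s t xn : ℝ, 0 < s → s < t → t < 1 →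
      Real.exp (-(xn ^ 2) / (c * s)) / (1 - t + s) ^ (1 - a) ≤
        C / (xn ^ 2 + 1 - t + s) ^ (1 - a) := by
  refine ⟨1 + c, by linarith, fun s t xn hs hst ht1 => ?_⟩
  have hu0 : 0 < 1 - t + s := by linarith
  have hx : (0:ℝ) ≤ xn ^ 2 := sq_nonneg xn
  have hxu : 0 < xn ^ 2 + 1 - t + s := by linarith
  have hup : 0 < (1 - t + s) ^ (1 - a) := Real.rpow_pos_of_pos hu0 _
  have hxup : 0 < (xn ^ 2 + 1 - t + s) ^ (1 - a) := Real.rpow_pos_of_pos hxu _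
  rw [div_le_div_iff₀ hup hxup]
  -- key scalar bound
  set z : ℝ := xn ^ 2 / (c * s) with hz
  have hcs : 0 < c * s := mul_pos hc hs
  have hz0 : 0 ≤ z := div_nonneg hx hcs.le
  have hxz : xn ^ 2 = c * s * z := by rw [hz]; field_simp
  have hexp : Real.exp (-(xn ^ 2) / (c * s)) = (Real.exp z)⁻¹ := by
    rw [← Real.exp_neg, hz]; ring_nf
  have hez : 1 + z ≤ Real.exp z := by linarith [Real.add_one_le_exp z]
  have hexppos : 0 < Real.exp z := Real.exp_pos z
  have key : Real.exp (-(xn ^ 2) / (c * s)) * (1 + xn ^ 2 / s) ≤ 1 + c := by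
    rw [hexp]
    have h1 : xn ^ 2 / s = c * z := by rw [hxz]; field_simp
    rw [h1, inv_mul_le_iff₀ hexppos]
    nlinarith [hez, hc.le, hz0, hexppos.le]
  -- factor the rpow
  have hfac : (xn ^ 2 + 1 - t + s) ^ (1 - a)
      = (1 - t + s) ^ (1 - a) * (1 + xn ^ 2 / (1 - t + s)) ^ (1 - a) := by
    rw [← Real.mul_rpow hu0.le (by positivity)]
    congr 1
    field_simp
    ring
  have hbase : (1:ℝ) ≤ 1 + xn ^ 2 / (1 - t + s) := by
    have : 0 ≤ xn ^ 2 / (1 - t + s) := by positivity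
    linarith
  have hr1 : (1 + xn ^ 2 / (1 - t + s)) ^ (1 - a) ≤ 1 + xn ^ 2 / (1 - t + s) := by
    nth_rewrite 2 [← Real.rpow_one (1 + xn ^ 2 / (1 - t + s))]
    exact Real.rpow_le_rpow_of_exponent_le hbase (by linarith)
  have hmono : xn ^ 2 / (1 - t + s) ≤ xn ^ 2 / s :=
    div_le_div_of_nonneg_left hx hs (by linarith)
  calc Real.exp (-(xn ^ 2) / (c * s)) * (xn ^ 2 + 1 - t + s) ^ (1 - a)
      = (1 - t + s) ^ (1 - a) * (Real.exp (-(xn ^ 2) / (c * s))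
          * (1 + xn ^ 2 / (1 - t + s)) ^ (1 - a)) := by rw [hfac]; ring
    _ ≤ (1 - t + s) ^ (1 - a) * (1 + c) := by
        refine mul_le_mul_of_nonneg_left ?_ hup.le
        calc Real.exp (-(xn ^ 2) / (c * s)) * (1 + xn ^ 2 / (1 - t + s)) ^ (1 - a)
            ≤ Real.exp (-(xn ^ 2) / (c * s)) * (1 + xn ^ 2 / s) := by
              refine mul_le_mul_of_nonneg_left ?_ (Real.exp_pos _).le
              linarith [hr1]
          _ ≤ 1 + c := key
    _ = (1 + c) * (1 - t + s) ^ (1 - a) := by ring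
end

section
/- Let c > 0. Then there is a constant C = C(c) such that for all t > 0 and all x_n > 0, ∫_0^t s^{-1} exp(-x_n^2/(c s)) ds ≤ C exp(-x_n^2/(c t)) log(1 + c t / x_n^2). -/
open Real MeasureTheory Set intervalIntegral

-- pointwise bound: s⁻¹ e^{-a/s} ≤ a⁻¹ for 0 < s
lemma ptbd {a s : ℝ} (ha : 0 < a) (hs : 0 < s) :
    s⁻¹ * Real.exp (-a / s) ≤ a⁻¹ := by
  have hx : 0 < a / s := div_pos ha hs
  have h1 : a / s ≤ Real.exp (a / s) := (Real.add_one_le_exp _).trans' (by linarith)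
  have h2 : Real.exp (-a / s) ≤ (a / s)⁻¹ := by
    rw [neg_div, Real.exp_neg]
    exact inv_anti₀ hx h1
  calc s⁻¹ * Real.exp (-a / s) ≤ s⁻¹ * (a / s)⁻¹ := by
        exact mul_le_mul_of_nonneg_left h2 (by positivity)
    _ = a⁻¹ := by field_simp

lemma intgr {a : ℝ} (ha : 0 < a) (u v : ℝ) (hu : 0 ≤ u) (huv : u ≤ v) :
    IntervalIntegrable (fun s => s⁻¹ * Real.exp (-a / s)) volume u v := by
  rw [intervalIntegrable_iff_integrableOn_Ioc_of_le huv]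
  have hmeas : Measurable fun s : ℝ => s⁻¹ * Real.exp (-a / s) := by
    simp only [div_eq_mul_inv]
    exact measurable_inv.mul (Real.measurable_exp.comp (measurable_inv.const_mul _))
  refine Integrable.mono' (integrable_const a⁻¹) hmeas.aestronglyMeasurable ?_
  filter_upwards [ae_restrict_mem measurableSet_Ioc] with s hs
  have hs0 : 0 < s := lt_of_le_of_lt hu hs.1
  rw [Real.norm_eq_abs, abs_of_nonneg (mul_nonneg (inv_nonneg.2 hs0.le) (Real.exp_nonneg _))]
  exact ptbd ha hs0

lemma eps_bd {a t ε : ℝ} (ha : 0 < a) (hε : 0 < ε) (hεt : ε ≤ t) :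
    ∫ s in ε..t, s⁻¹ * Real.exp (-a / s) ≤ t / a * Real.exp (-a / t) := by
  have huIcc : Set.uIcc ε t = Set.Icc ε t := Set.uIcc_of_le hεt
  have hpos : ∀ s ∈ Set.uIcc ε t, 0 < s := by
    rw [huIcc]; intro s hs; exact lt_of_lt_of_le hε hs.1
  have hne : ∀ s ∈ Set.uIcc ε t, s ≠ 0 := fun s hs => (hpos s hs).ne'
  have hderiv : ∀ s ∈ Set.uIcc ε t,
      HasDerivAt (fun x => Real.exp (-a / x)) (Real.exp (-a / s) * (a / s ^ 2)) s := by
    intro s hs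
    have h1 : HasDerivAt (fun x : ℝ => -a * x⁻¹) (-a * -(s ^ 2)⁻¹) s :=
      (hasDerivAt_inv (hne s hs)).const_mul (-a)
    have h2 := h1.exp
    simp only [div_eq_mul_inv]
    convert h2 using 1
    field_simp
  have hcont : ContinuousOn (fun s : ℝ => Real.exp (-a / s) * (a / s ^ 2)) (Set.uIcc ε t) :=
    (Real.continuous_exp.comp_continuousOn
      ((continuousOn_const.div continuousOn_id hne))).mul
      (continuousOn_const.div (continuousOn_id.pow 2) (fun s hs => pow_ne_zero 2 (hne s hs)))
  have key : ∫ s in ε..t, Real.exp (-a / s) * (a / s ^ 2)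
      = Real.exp (-a / t) - Real.exp (-a / ε) :=
    integral_eq_sub_of_hasDerivAt hderiv hcont.intervalIntegrable
  have hmono : ∫ s in ε..t, s⁻¹ * Real.exp (-a / s)
      ≤ ∫ s in ε..t, t / a * (Real.exp (-a / s) * (a / s ^ 2)) := by
    refine integral_mono_on hεt (intgr ha ε t hε.le hεt)
      (hcont.intervalIntegrable.const_mul _) ?_
    intro x hx
    have hx0 : 0 < x := lt_of_lt_of_le hε hx.1
    have hE : 0 < Real.exp (-a / x) := Real.exp_pos _
    have h3 : x⁻¹ ≤ t / x ^ 2 := by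
      rw [inv_eq_one_div, div_le_div_iff₀ hx0 (by positivity)]
      nlinarith [hx.2]
    calc x⁻¹ * Real.exp (-a / x) ≤ t / x ^ 2 * Real.exp (-a / x) :=
          mul_le_mul_of_nonneg_right h3 hE.le
      _ = t / a * (Real.exp (-a / x) * (a / x ^ 2)) := by
          field_simp
  calc ∫ s in ε..t, s⁻¹ * Real.exp (-a / s)
      ≤ ∫ s in ε..t, t / a * (Real.exp (-a / s) * (a / s ^ 2)) := hmono
    _ = t / a * (Real.exp (-a / t) - Real.exp (-a / ε)) := by
        rw [intervalIntegral.integral_const_mul, key]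
    _ ≤ t / a * Real.exp (-a / t) := by
        have h4 : 0 ≤ t / a := div_nonneg (hε.trans_le hεt).le ha.le
        nlinarith [Real.exp_pos (-a / ε)]

lemma L1 {a t : ℝ} (ha : 0 < a) (ht : 0 < t) :
    ∫ s in (0:ℝ)..t, s⁻¹ * Real.exp (-a / s) ≤ t / a * Real.exp (-a / t) := by
  set f : ℝ → ℝ := fun s => s⁻¹ * Real.exp (-a / s) with hf
  set S : ℕ → Set ℝ := fun n => Set.Ioc (t / (n + 1)) t with hS
  have hsm : ∀ n, MeasurableSet (S n) := fun n => measurableSet_Ioc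
  have hmono : Monotone S := by
    intro m n hmn
    have h1 : (m : ℝ) + 1 ≤ n + 1 := by exact_mod_cast Nat.succ_le_succ hmn
    exact Set.Ioc_subset_Ioc_left (by gcongr)
  have hunion : ⋃ n, S n = Set.Ioc 0 t := by
    ext x
    simp only [hS, Set.mem_iUnion, Set.mem_Ioc]
    constructor
    · rintro ⟨n, h1, h2⟩
      exact ⟨lt_trans (by positivity) h1, h2⟩
    · rintro ⟨hx0, hxt⟩
      obtain ⟨n, hn⟩ := exists_nat_gt (t / x)
      refine ⟨n, ?_, hxt⟩
      rw [div_lt_iff₀ (by positivity)]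
      have := (div_lt_iff₀ hx0).1 (hn.trans (lt_add_one _))
      linarith
  have hint : IntegrableOn f (Set.Ioc 0 t) volume := by
    have := intgr ha 0 t le_rfl ht.le
    rwa [intervalIntegrable_iff_integrableOn_Ioc_of_le ht.le] at this
  have htend := tendsto_setIntegral_of_monotone hsm hmono (hunion ▸ hint)
  rw [intervalIntegral.integral_of_le ht.le, ← hunion]
  refine le_of_tendsto htend (Filter.Eventually.of_forall fun n => ?_)
  have hε : 0 < t / (n + 1) := by positivity
  have hεt : t / (n + 1) ≤ t := div_le_self ht.le (by exact_mod_cast Nat.succ_le_succ n.zero_le)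
  have := eps_bd ha hε hεt
  rwa [intervalIntegral.integral_of_le hεt] at this

lemma L2 {a t : ℝ} (ha : 0 < a) (hat : a ≤ t) :
    ∫ s in a..t, s⁻¹ * Real.exp (-a / s) ≤ Real.exp (-a / t) * Real.log (t / a) := by
  have hne : ∀ x ∈ Set.uIcc a t, x ≠ 0 := by
    rw [Set.uIcc_of_le hat]
    exact fun x hx => (lt_of_lt_of_le ha hx.1).ne'
  have hintinv : IntervalIntegrable (fun s : ℝ => Real.exp (-a / t) * s⁻¹) volume a t :=
    IntervalIntegrable.const_mul (intervalIntegral.intervalIntegrable_inv hne continuousOn_id) _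
  have hmono : ∫ s in a..t, s⁻¹ * Real.exp (-a / s)
      ≤ ∫ s in a..t, Real.exp (-a / t) * s⁻¹ := by
    refine integral_mono_on hat (intgr ha a t ha.le hat) hintinv ?_
    intro x hx
    have hx0 : 0 < x := lt_of_lt_of_le ha hx.1
    have hE : Real.exp (-a / x) ≤ Real.exp (-a / t) := by
      apply Real.exp_le_exp.2
      rw [neg_div, neg_div, neg_le_neg_iff]
      exact (div_le_div_iff_of_pos_left ha (hx0.trans_le hx.2) hx0).2 hx.2
    rw [mul_comm]
    exact mul_le_mul_of_nonneg_right hE (inv_nonneg.2 hx0.le)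
  calc ∫ s in a..t, s⁻¹ * Real.exp (-a / s)
      ≤ ∫ s in a..t, Real.exp (-a / t) * s⁻¹ := hmono
    _ = Real.exp (-a / t) * Real.log (t / a) := by
        rw [intervalIntegral.integral_const_mul, integral_inv_of_pos ha (ha.trans_le hat)]

lemma log_ge {x : ℝ} (hx : 0 ≤ x) : x / (1 + x) ≤ Real.log (1 + x) := by
  have h1 : 0 < 1 + x := by linarith
  have h2 := Real.log_le_sub_one_of_pos (inv_pos.2 h1)
  rw [Real.log_inv] at h2
  have h3 : x / (1 + x) = 1 - (1 + x)⁻¹ := by field_simp; ring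
  linarith

theorem stmt3 (c : ℝ) (hc : 0 < c) :
    ∃ C : ℝ, 0 < C ∧ ∀ t xn : ℝ, 0 < t → 0 < xn →
      ∫ s in (0:ℝ)..t, s⁻¹ * Real.exp (-(xn ^ 2) / (c * s)) ≤
        C * Real.exp (-(xn ^ 2) / (c * t)) * Real.log (1 + c * t / xn ^ 2) := by
  refine ⟨3, by norm_num, fun t xn ht hxn => ?_⟩
  set a := xn ^ 2 / c with ha_def
  have ha : 0 < a := by positivity
  have hEq : ∀ s : ℝ, -(xn ^ 2) / (c * s) = -a / s := by
    intro s
    rw [ha_def, neg_div, neg_div, div_div]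
  have hta : c * t / xn ^ 2 = t / a := by
    rw [ha_def, div_div_eq_mul_div, mul_comm c t, mul_div_assoc]
  simp only [hEq, hta]
  set b := Real.exp (-a / t) with hb_def
  set L := Real.log (1 + t / a) with hL_def
  have hb : 0 < b := Real.exp_pos _
  have hx0 : 0 < t / a := div_pos ht ha
  have hlog := log_ge hx0.le
  have hLpos : 0 < L := Real.log_pos (by linarith)
  rcases le_or_gt t a with hcase | hcase
  · -- t ≤ a
    have h1 := L1 ha ht
    have h5 : t / a ≤ 1 := (div_le_one ha).2 hcase
    have h6 : t / a / 2 ≤ t / a / (1 + t / a) := by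
      gcongr
      linarith
    have h7 : t / a ≤ 2 * L := by
      rw [hL_def]; linarith
    nlinarith
  · -- a < t
    have hsplit := integral_add_adjacent_intervals
      (intgr ha 0 a le_rfl ha.le) (intgr ha a t ha.le hcase.le)
      (f := fun s => s⁻¹ * Real.exp (-a / s)) (μ := volume)
    rw [← hsplit]
    have h1 := L1 ha ha
    rw [div_self ha.ne'] at h1
    have h2 : Real.exp (-a / a) = Real.exp (-1) := by
      rw [neg_div, div_self ha.ne']
    rw [h2, one_mul] at h1
    have h3 : Real.exp (-1) ≤ b := by
      rw [hb_def]
      apply Real.exp_le_exp.2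
      rw [neg_div, neg_le_neg_iff, div_le_one ht]
      exact hcase.le
    have h4 := L2 ha hcase.le
    have h5 : Real.log (t / a) ≤ L := by
      rw [hL_def]
      exact Real.log_le_log (by positivity) (by linarith)
    have h6 : Real.log 2 ≤ L := by
      rw [hL_def]
      apply Real.log_le_log (by norm_num)
      have : 1 ≤ t / a := (one_le_div ha).2 hcase.le
      linarith
    have h7 : (1:ℝ)/2 ≤ Real.log 2 := by
      have := Real.log_two_gt_d9
      linarith
    have h8 : 0 ≤ Real.log (t / a) := Real.log_nonneg ((one_le_div ha).2 hcase.le)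
    nlinarith
end

section
/- Let c > 0 and 0 < k < 1. Then there is a constant C = C(c,k) such that for all t > 0 and all x_n ≥ 0, ∫_0^t s^{-k} exp(-x_n^2/(c s)) ds ≤ C t^{1-k} exp(-x_n^2/(2 c t)). -/
open Real

theorem stmt4 (c k : ℝ) (hc : 0 < c) (hk0 : 0 < k) (hk1 : k < 1) :
    ∃ C : ℝ, 0 < C ∧ ∀ t xn : ℝ, 0 < t → 0 ≤ xn →
      ∫ s in (0:ℝ)..t, s ^ (-k) * Real.exp (-(xn ^ 2) / (c * s)) ≤
        C * t ^ (1 - k) * Real.exp (-(xn ^ 2) / (2 * c * t)) := by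
  have h1k : 0 < 1 - k := by linarith
  refine ⟨(1 - k)⁻¹, by positivity, fun t xn ht hxn => ?_⟩
  set E := Real.exp (-(xn ^ 2) / (2 * c * t)) with hE
  have hEpos : 0 < E := Real.exp_pos _
  have hg : IntervalIntegrable (fun s : ℝ => s ^ (-k) * E) MeasureTheory.volume 0 t := by
    apply IntervalIntegrable.mul_const
    apply intervalIntegral.intervalIntegrable_rpow'
    linarith
  have hbound : ∀ s ∈ Set.uIcc (0:ℝ) t,
      s ^ (-k) * Real.exp (-(xn ^ 2) / (c * s)) ≤ s ^ (-k) * E := by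
    intro s hs
    rw [Set.uIcc_of_le ht.le] at hs
    rcases eq_or_lt_of_le hs.1 with h0 | h0
    · simp [← h0, Real.zero_rpow (by linarith : -k ≠ 0)]
    · have hrp : (0:ℝ) ≤ s ^ (-k) := Real.rpow_nonneg h0.le _
      apply mul_le_mul_of_nonneg_left _ hrp
      apply Real.exp_le_exp.2
      rw [div_le_div_iff₀ (by positivity) (by positivity)]
      nlinarith [mul_nonneg (mul_nonneg (sq_nonneg xn) hc.le)
        (by linarith [hs.2] : (0:ℝ) ≤ 2 * t - s)]
  have hf : IntervalIntegrable (fun s : ℝ => s ^ (-k) * Real.exp (-(xn ^ 2) / (c * s)))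
      MeasureTheory.volume 0 t := by
    apply hg.mono_fun'
    · apply ContinuousOn.aestronglyMeasurable _ measurableSet_uIoc
      rw [Set.uIoc_of_le ht.le]
      apply ContinuousOn.mul
      · exact continuousOn_id.rpow_const fun x hx => Or.inl (ne_of_gt hx.1)
      · apply Real.continuous_exp.comp_continuousOn
        exact continuousOn_const.div (continuousOn_const.mul continuousOn_id)
          fun x hx => by have := hx.1; positivity
    · filter_upwards [MeasureTheory.ae_restrict_mem measurableSet_uIoc] with s hs
      rw [Set.uIoc_of_le ht.le] at hs
      have hfnn : 0 ≤ s ^ (-k) * Real.exp (-(xn ^ 2) / (c * s)) :=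
        mul_nonneg (Real.rpow_nonneg hs.1.le _) (Real.exp_pos _).le
      rw [Real.norm_of_nonneg hfnn]
      exact hbound s (by rw [Set.uIcc_of_le ht.le]; exact ⟨hs.1.le, hs.2⟩)
  calc ∫ s in (0:ℝ)..t, s ^ (-k) * Real.exp (-(xn ^ 2) / (c * s))
      ≤ ∫ s in (0:ℝ)..t, s ^ (-k) * E :=
        intervalIntegral.integral_mono_on ht.le hf hg
          (fun s hs => hbound s (by rwa [Set.uIcc_of_le ht.le]))
    _ = (∫ s in (0:ℝ)..t, s ^ (-k)) * E := by
        rw [intervalIntegral.integral_mul_const]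
    _ = (1 - k)⁻¹ * t ^ (1 - k) * E := by
        rw [integral_rpow (Or.inl (by linarith))]
        rw [Real.zero_rpow (by linarith : -k + 1 ≠ 0)]
        ring_nf
end

section
/- Let n ≥ 3 be an integer and set H(x, y) = (x^2 + y^2)^{-(n-2)/2} for (x,y) ≠ (0,0). Then for all reals 0 ≤ t < u and 0 ≤ a < b, H(t, a) - H(t, b) - H(u, a) + H(u, b) ≥ (n(n-2)/4) (u^2 - t^2)(b^2 - a^2) H(u, b)^{(n+2)/(n-2)}. -/
open Real

private lemma hd_aux (k p : ℝ) (x : ℝ) (hx : x + k ≠ 0) :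
    HasDerivAt (fun x => (x + k) ^ p) (p * (x + k) ^ (p - 1)) x := by
  simpa using ((hasDerivAt_id x).add_const k).rpow_const (Or.inl hx)

set_option maxHeartbeats 1000000 in
theorem stmt15 (n : ℕ) (hn : 3 ≤ n)
    (H : ℝ → ℝ → ℝ) (hH : ∀ x y, H x y = (x ^ 2 + y ^ 2) ^ (-(((n : ℝ) - 2) / 2)))
    (t u a b : ℝ) (ht : 0 ≤ t) (htu : t < u) (ha : 0 ≤ a) (hab : a < b)
    (hta : (t, a) ≠ (0, 0)) :
    H t a - H t b - H u a + H u b ≥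
      ((n : ℝ) * ((n : ℝ) - 2) / 4) * (u ^ 2 - t ^ 2) * (b ^ 2 - a ^ 2) *
        (H u b) ^ (((n : ℝ) + 2) / ((n : ℝ) - 2)) := by
  have hn3 : (3 : ℝ) ≤ (n : ℝ) := by exact_mod_cast hn
  set p : ℝ := ((n : ℝ) - 2) / 2 with hp_def
  have hp : 0 < p := by simp only [hp_def]; linarith
  set P := t ^ 2 with hP
  set U := u ^ 2 with hU
  set A := a ^ 2 with hA
  set B := b ^ 2 with hB
  have hPU : P < U := by simp only [hP, hU]; nlinarith
  have hAB : A < B := by simp only [hA, hB]; nlinarith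
  have hPA : 0 < P + A := by
    have : t ≠ 0 ∨ a ≠ 0 := by
      by_contra h
      push_neg at h
      exact hta (by simp [h.1, h.2])
    rcases this with h | h <;> positivity
  have hpos : ∀ x ∈ Set.Icc P U, ∀ k, A ≤ k → 0 < x + k := fun x hx k hk => by
    have := hx.1; nlinarith
  -- MVT 1 in x
  set φ : ℝ → ℝ := fun x => (x + A) ^ (-p) - (x + B) ^ (-p) with hφ
  have hφd : ∀ x ∈ Set.Ioo P U, HasDerivAt φ
      (-p * (x + A) ^ (-p - 1) - -p * (x + B) ^ (-p - 1)) x := by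
    intro x hx
    have h1 := hd_aux A (-p) x (hpos x (Set.Ioo_subset_Icc_self hx) A le_rfl).ne'
    have h2 := hd_aux B (-p) x (hpos x (Set.Ioo_subset_Icc_self hx) B hAB.le).ne'
    exact (h1.sub h2).congr_deriv (by ring)
  have hφc : ContinuousOn φ (Set.Icc P U) := fun x hx =>
    (((hd_aux A (-p) x (hpos x hx A le_rfl).ne').sub
      (hd_aux B (-p) x (hpos x hx B hAB.le).ne')).continuousAt).continuousWithinAt
  obtain ⟨c, hc, hc2⟩ := exists_hasDerivAt_eq_slope φ _ hPU hφc hφd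
  have hcA : 0 < c + A := by have := hc.1; linarith
  have hcB : 0 < c + B := by linarith
  -- MVT 2 in y
  set ψ : ℝ → ℝ := fun y => -p * (y + c) ^ (-p - 1) with hψ
  have hψd : ∀ y ∈ Set.Ioo A B, HasDerivAt ψ
      (-p * ((-p - 1) * (y + c) ^ (-p - 1 - 1))) y := by
    intro y hy
    have := (hd_aux c (-p - 1) y (by have := hy.1; linarith : (0:ℝ) < y + c).ne')
    simpa [hψ, mul_comm, mul_left_comm, mul_assoc] using this.const_mul (-p)
  have hψc : ContinuousOn ψ (Set.Icc A B) := fun y hy => by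
    have := (hd_aux c (-p - 1) y (by have := hy.1; linarith : (0:ℝ) < y + c).ne')
    exact (this.const_mul (-p)).continuousAt.continuousWithinAt
  obtain ⟨d, hd, hd2⟩ := exists_hasDerivAt_eq_slope ψ _ hAB hψc hψd
  have hdc : 0 < d + c := by have := hd.1; linarith
  have hUP : (0:ℝ) < U - P := by linarith
  have hBA : (0:ℝ) < B - A := by linarith
  -- assemble
  have key : φ P - φ U = p * (p + 1) * (d + c) ^ (-p - 1 - 1) * (B - A) * (U - P) := by
    have h1 : φ U - φ P
        = (-p * (c + A) ^ (-p - 1) - -p * (c + B) ^ (-p - 1)) * (U - P) :=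
      (div_eq_iff hUP.ne').mp hc2.symm
    have h2 : ψ B - ψ A = -p * ((-p - 1) * (d + c) ^ (-p - 1 - 1)) * (B - A) :=
      (div_eq_iff hBA.ne').mp hd2.symm
    have e1 : φ P - φ U = (ψ B - ψ A) * (U - P) := by
      simp only [hψ, add_comm _ c]
      linear_combination -h1
    rw [e1, h2]
    ring
  rw [hH, hH, hH, hH]
  have hUB : 0 < U + B := by nlinarith
  have hn2 : (n : ℝ) - 2 ≠ 0 := by linarith
  have hrhs : ((U + B) ^ (-p)) ^ (((n : ℝ) + 2) / ((n : ℝ) - 2)) = (U + B) ^ (-p - 1 - 1) := by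
    rw [← Real.rpow_mul hUB.le]
    congr 1
    field_simp
    ring
  have hcoef : (n : ℝ) * ((n : ℝ) - 2) / 4 = p * (p + 1) := by
    simp only [hp_def]; ring
  have lhs_eq : (P + A) ^ (-p) - (P + B) ^ (-p) - (U + A) ^ (-p) + (U + B) ^ (-p)
      = φ P - φ U := by simp only [hφ]; ring
  rw [ge_iff_le, hrhs, hcoef, lhs_eq, key]
  have hmono : (U + B) ^ (-p - 1 - 1) ≤ (d + c) ^ (-p - 1 - 1) :=
    Real.rpow_le_rpow_of_nonpos hdc (by have := hd.2; have := hc.2; linarith)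
      (by linarith)
  have hK : (0:ℝ) ≤ p * (p + 1) * (B - A) * (U - P) :=
    mul_nonneg (mul_nonneg (mul_nonneg hp.le (by linarith)) hBA.le) hUP.le
  nlinarith [mul_le_mul_of_nonneg_left hmono hK]
end
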